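/- In a preemptive M/G/1-LIFO queue, the slowdown-cost of admitting a job of size x into state z with jobs of initial sizes Δ*_1,…,Δ*_n is ω_z(x) = (1/(1−ρ))(1 + Σ_{i=1}^n x/Δ*_i), and this does not depend on the remaining sizes Δ_i. -/
import Mathlib


/-- Sum `Σᵢ bᵢ · (acc + Σ_{j≤i} Δⱼ)` over a list of (remaining size, holding cost) pairs,
jobs indexed in service order (head of list in service). -/
def costSum : ℝ → List (ℝ × ℝ) → ℝ
  | _, [] => 0
  | acc, (d, b) :: rest => b * (acc + d) + costSum (acc + d) rest

/-- The preemptive M/G/1-LIFO relative value function with job-specific holding costs. -/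
noncomputable def lifoValue (ρ : ℝ) (z : List (ℝ × ℝ)) : ℝ :=
  (1 / (1 - ρ)) * costSum 0 z

/-- Slowdown-cost of admitting a job of size `x` (holding cost `1/x`) into a preemptive
M/G/1-LIFO queue whose jobs have remaining sizes `Δᵢ` and initial sizes `Δ*ᵢ`
(holding costs `1/Δ*ᵢ`): `ω_z(x) = (1/(1−ρ))(1 + Σᵢ x/Δ*ᵢ)`; in particular the cost
does not depend on the remaining sizes `Δᵢ`. -/
theorem lifo_slowdown_admission_cost (ρ x : ℝ) (hρ : ρ < 1) (hx : 0 < x)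
    {n : ℕ} (Δ Δstar : Fin n → ℝ) (hΔstar : ∀ i, 0 < Δstar i) :
    lifoValue ρ ((x, x⁻¹) :: List.ofFn (fun i => (Δ i, (Δstar i)⁻¹)))
        - lifoValue ρ (List.ofFn (fun i => (Δ i, (Δstar i)⁻¹)))
      = (1 / (1 - ρ)) * (1 + ∑ i, x / Δstar i) := by
  have shift : ∀ (l : List (ℝ × ℝ)) (a c : ℝ),
      costSum (a + c) l = costSum a l + c * (l.map Prod.snd).sum := by
    intro l
    induction l with
    | nil => intro a c; simp [costSum]
    | cons hd tl ih =>
      intro a c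
      obtain ⟨d, b⟩ := hd
      simp only [costSum, List.map_cons, List.sum_cons]
      have : a + c + d = a + d + c := by ring
      rw [this, ih]
      ring
  set l := List.ofFn (fun i => (Δ i, (Δstar i)⁻¹)) with hl
  have hsnd : (l.map Prod.snd).sum = ∑ i, (Δstar i)⁻¹ := by
    rw [hl, List.map_ofFn, List.sum_ofFn]
    rfl
  have h0 : costSum (0 + x) l = costSum 0 l + x * (l.map Prod.snd).sum := shift l 0 x
  simp only [lifoValue, costSum]
  rw [zero_add] at h0 ⊢
  rw [h0, hsnd]
  have hxne : x ≠ 0 := ne_of_gt hx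
  rw [← mul_sub]
  congr 1
  rw [Finset.mul_sum, inv_mul_cancel₀ hxne]
  simp [div_eq_mul_inv]
  ring
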